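/- Over the polar triangle family Q₁Q₂Q₃, the line through the barycenter G' = (Q₁+Q₂+Q₃)/3 and the circumcenter O' (the Euler line) passes through the point F = (−f, 0), the focus of the original parabola: i.e., F, G', O' are collinear for every admissible y₁. -/

import Mathlib

set_option maxHeartbeats 4000000 in
theorem polar_euler_line_through_focus (f y₁ Δ : ℝ) (hf : 0 < f) (Q₁ Q₂ Q₃ O G : ℝ × ℝ)
    (hΔ : Δ = Real.sqrt (y₁ ^ 4 + 8 * f ^ 2 * y₁ ^ 2 + 16 * (8 * Real.sqrt 2 - 11) * f ^ 4))
    (hden₁ : 2 * (2 * Real.sqrt 2 + 3) * y₁ ^ 2 - 8 * f ^ 2 ≠ 0)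
    (hden₃ : (3 + 2 * Real.sqrt 2) * y₁ ^ 2 - 4 * f ^ 2 ≠ 0)
    (hQ₁ : Q₁ = ((1 + Real.sqrt 2) * ((4 * f * y₁ + Δ) * y₁ /
        (2 * (2 * Real.sqrt 2 + 3) * y₁ ^ 2 - 8 * f ^ 2)),
      (1 + Real.sqrt 2) * (((1 + Real.sqrt 2) * y₁ ^ 3 - 4 * (1 + Real.sqrt 2) * f ^ 2 * y₁ -
        2 * Δ * f) / (2 * (2 * Real.sqrt 2 + 3) * y₁ ^ 2 - 8 * f ^ 2))))
    (hQ₂ : Q₂ = ((1 + Real.sqrt 2) * ((4 * f * y₁ - Δ) * y₁ /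
        (2 * (2 * Real.sqrt 2 + 3) * y₁ ^ 2 - 8 * f ^ 2)),
      (1 + Real.sqrt 2) * (((1 + Real.sqrt 2) * y₁ ^ 3 - 4 * (1 + Real.sqrt 2) * f ^ 2 * y₁ +
        2 * Δ * f) / (2 * (2 * Real.sqrt 2 + 3) * y₁ ^ 2 - 8 * f ^ 2))))
    (hQ₃ : Q₃ = ((1 + Real.sqrt 2) * ((5 - 3 * Real.sqrt 2) *
        ((1 + 2 * Real.sqrt 2) * y₁ ^ 2 - 28 * f ^ 2) * f /
        (7 * ((3 + 2 * Real.sqrt 2) * y₁ ^ 2 - 4 * f ^ 2))),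
      (1 + Real.sqrt 2) * (-(8 * f ^ 2 * y₁) /
        ((3 + 2 * Real.sqrt 2) * y₁ ^ 2 - 4 * f ^ 2))))
    (hO₁ : (O.1 - Q₁.1) ^ 2 + (O.2 - Q₁.2) ^ 2 = (O.1 - Q₂.1) ^ 2 + (O.2 - Q₂.2) ^ 2)
    (hO₂ : (O.1 - Q₁.1) ^ 2 + (O.2 - Q₁.2) ^ 2 = (O.1 - Q₃.1) ^ 2 + (O.2 - Q₃.2) ^ 2)
    (hG : G = (((Q₁.1 + Q₂.1 + Q₃.1) / 3 : ℝ), ((Q₁.2 + Q₂.2 + Q₃.2) / 3 : ℝ))) :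
    (G.1 - (-f)) * (O.2 - 0) - (G.2 - 0) * (O.1 - (-f)) = 0 := by
  have hs : Real.sqrt 2 ^ 2 = 2 := Real.sq_sqrt (by norm_num)
  have hsnn : (0:ℝ) ≤ Real.sqrt 2 := Real.sqrt_nonneg 2
  have h11 : (11:ℝ) < 8 * Real.sqrt 2 := by nlinarith [hs, hsnn]
  have hrad : (0:ℝ) < y₁ ^ 4 + 8 * f ^ 2 * y₁ ^ 2 + 16 * (8 * Real.sqrt 2 - 11) * f ^ 4 := by
    nlinarith [sq_nonneg (y₁^2), sq_nonneg (f*y₁), pow_pos hf 4, h11]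
  have hDpos : 0 < Δ := by rw [hΔ]; exact Real.sqrt_pos.mpr hrad
  have hD2 : Δ^2 = y₁^4+8*f^2*y₁^2+16*(8*Real.sqrt 2-11)*f^4 := by
    rw [hΔ, Real.sq_sqrt hrad.le]
  have hg1x : Q₁.1*(2*(2*Real.sqrt 2+3)*y₁^2-8*f^2) = ((1+Real.sqrt 2)*((4*f*y₁+Δ)*y₁)) := by
    rw [hQ₁]; dsimp only; rw [mul_div_assoc', div_mul_cancel₀ _ hden₁]
  have hg1y : Q₁.2*(2*(2*Real.sqrt 2+3)*y₁^2-8*f^2) = ((1+Real.sqrt 2)*((1+Real.sqrt 2)*y₁^3-4*(1+Real.sqrt 2)*f^2*y₁-2*Δ*f)) := by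
    rw [hQ₁]; dsimp only; rw [mul_div_assoc', div_mul_cancel₀ _ hden₁]
  have hg2x : Q₂.1*(2*(2*Real.sqrt 2+3)*y₁^2-8*f^2) = ((1+Real.sqrt 2)*((4*f*y₁-Δ)*y₁)) := by
    rw [hQ₂]; dsimp only; rw [mul_div_assoc', div_mul_cancel₀ _ hden₁]
  have hg2y : Q₂.2*(2*(2*Real.sqrt 2+3)*y₁^2-8*f^2) = ((1+Real.sqrt 2)*((1+Real.sqrt 2)*y₁^3-4*(1+Real.sqrt 2)*f^2*y₁+2*Δ*f)) := by
    rw [hQ₂]; dsimp only; rw [mul_div_assoc', div_mul_cancel₀ _ hden₁]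
  have hg3x : Q₃.1*(7*((3+2*Real.sqrt 2)*y₁^2-4*f^2)) = ((1+Real.sqrt 2)*((5-3*Real.sqrt 2)*((1+2*Real.sqrt 2)*y₁^2-28*f^2)*f)) := by
    rw [hQ₃]; dsimp only; rw [mul_div_assoc', div_mul_cancel₀ _ (mul_ne_zero (by norm_num) hden₃)]
  have hg3y : Q₃.2*((3+2*Real.sqrt 2)*y₁^2-4*f^2) = ((1+Real.sqrt 2)*(-(8*f^2*y₁))) := by
    rw [hQ₃]; dsimp only; rw [mul_div_assoc', div_mul_cancel₀ _ hden₃]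
  have hE1 : ((-56)*y₁^3*Δ*O.1 + 112*f*y₁^2*Δ*O.2 + (-8)*f*y₁^3*Δ + 32*f^2*y₁*Δ*O.1 + (-64)*f^3*Δ*O.2 + 224*f^3*y₁*Δ + (-40)*(Real.sqrt 2)*y₁^3*Δ*O.1 + 80*(Real.sqrt 2)*f*y₁^2*Δ*O.2 + (-8)*(Real.sqrt 2)*f*y₁^3*Δ + 32*(Real.sqrt 2)*f^2*y₁*Δ*O.1 + (-64)*(Real.sqrt 2)*f^3*Δ*O.2 + 160*(Real.sqrt 2)*f^3*y₁*Δ) = 0 := by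
    linear_combination (exp := 1) (6*y₁^2 + (-8)*f^2 + 4*(Real.sqrt 2)*y₁^2)^2 * hO₁ + ((-1)*(Q₁.1*(2*(2*Real.sqrt 2+3)*y₁^2-8*f^2)-((1+Real.sqrt 2)*((4*f*y₁+Δ)*y₁))) + (-2)*y₁*Δ + 12*y₁^2*O.1 + (-8)*f*y₁^2 + (-16)*f^2*O.1 + (-2)*(Real.sqrt 2)*y₁*Δ + 8*(Real.sqrt 2)*y₁^2*O.1 + (-8)*(Real.sqrt 2)*f*y₁^2) * hg1x + ((-1)*(Q₁.2*(2*(2*Real.sqrt 2+3)*y₁^2-8*f^2)-((1+Real.sqrt 2)*((1+Real.sqrt 2)*y₁^3-4*(1+Real.sqrt 2)*f^2*y₁-2*Δ*f))) + 12*y₁^2*O.2 + (-2)*y₁^3 + 4*f*Δ + (-16)*f^2*O.2 + 8*f^2*y₁ + 8*(Real.sqrt 2)*y₁^2*O.2 + (-4)*(Real.sqrt 2)*y₁^3 + 4*(Real.sqrt 2)*f*Δ + 16*(Real.sqrt 2)*f^2*y₁ + (-2)*(Real.sqrt 2)^2*y₁^3 + 8*(Real.sqrt 2)^2*f^2*y₁)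 * hg1y + ((Q₂.1*(2*(2*Real.sqrt 2+3)*y₁^2-8*f^2)-((1+Real.sqrt 2)*((4*f*y₁-Δ)*y₁))) + (-2)*y₁*Δ + (-12)*y₁^2*O.1 + 8*f*y₁^2 + 16*f^2*O.1 + (-2)*(Real.sqrt 2)*y₁*Δ + (-8)*(Real.sqrt 2)*y₁^2*O.1 + 8*(Real.sqrt 2)*f*y₁^2) * hg2x + ((Q₂.2*(2*(2*Real.sqrt 2+3)*y₁^2-8*f^2)-((1+Real.sqrt 2)*((1+Real.sqrt 2)*y₁^3-4*(1+Real.sqrt 2)*f^2*y₁+2*Δ*f))) + (-12)*y₁^2*O.2 + 2*y₁^3 + 4*f*Δ + 16*f^2*O.2 + (-8)*f^2*y₁ + (-8)*(Real.sqrt 2)*y₁^2*O.2 + 4*(Real.sqrt 2)*y₁^3 + 4*(Real.sqrt 2)*f*Δ + (-16)*(Real.sqrt 2)*f^2*y₁ + 2*(Real.sqrt 2)^2*y₁^3 + (-8)*(Real.sqrt 2)^2*f^2*y₁) * hg2y + (16*y₁^3*Δ*O.1 + (-32)*f*y₁^2*Δ*O.2 + 8*f*y₁^3*Δ + (-96)*f^3*y₁*Δ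 + 8*(Real.sqrt 2)*f*y₁^3*Δ + (-32)*(Real.sqrt 2)*f^3*y₁*Δ) * hs
  have hE2 : ((-46844)*y₁^7*Δ*O.1 + (-113092)*y₁^9*O.2 + 33124*y₁^10 + 93688*f*y₁^6*Δ*O.2 + (-8036)*f*y₁^7*Δ + (-148568)*f*y₁^8*O.1 + 96432*f^2*y₁^5*Δ*O.1 + (-64288)*f^2*y₁^7*O.2 + (-139160)*f^2*y₁^8 + (-192864)*f^3*y₁^4*Δ*O.2 + 198352*f^3*y₁^5*Δ + 21952*f^3*y₁^6*O.1 + (-65856)*f^4*y₁^3*Δ*O.1 + 451584*f^4*y₁^5*O.2 + (-417088)*f^4*y₁^6 + 131712*f^5*y₁^2*Δ*O.2 + (-260288)*f^5*y₁^3*Δ + 376320*f^5*y₁^4*O.1 + 12544*f^6*y₁*Δ*O.1 + (-376320)*f^6*y₁^3*O.2 + 652288*f^6*y₁^4 + (-25088)*f^7*Δ*O.2 + 87808*f^7*y₁*Δ + (-351232)*f^7*y₁^2*O.1 + 50176*f^8*y₁*O.2 + (-200704)*f^8*y₁^2 + (-100352)*f^9*O.1 + (-501760)*f^10 + (-33124)*(Real.sqrt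 2)*y₁^7*Δ*O.1 + (-79968)*(Real.sqrt 2)*y₁^9*O.2 + 23422*(Real.sqrt 2)*y₁^10 + 66248*(Real.sqrt 2)*f*y₁^6*Δ*O.2 + (-5684)*(Real.sqrt 2)*f*y₁^7*Δ + (-105056)*(Real.sqrt 2)*f*y₁^8*O.1 + 68208*(Real.sqrt 2)*f^2*y₁^5*Δ*O.1 + (-45472)*(Real.sqrt 2)*f^2*y₁^7*O.2 + (-98392)*(Real.sqrt 2)*f^2*y₁^8 + (-136416)*(Real.sqrt 2)*f^3*y₁^4*Δ*O.2 + 140336*(Real.sqrt 2)*f^3*y₁^5*Δ + 15680*(Real.sqrt 2)*f^3*y₁^6*O.1 + (-47040)*(Real.sqrt 2)*f^4*y₁^3*Δ*O.1 + 319872*(Real.sqrt 2)*f^4*y₁^5*O.2 + (-294784)*(Real.sqrt 2)*f^4*y₁^6 + 94080*(Real.sqrt 2)*f^5*y₁^2*Δ*O.2 + (-185024)*(Real.sqrt 2)*f^5*y₁^3*Δ + 263424*(Real.sqrt 2)*f^5*y₁^4*O.1 + 12544*(Real.sqrt 2)*f^6*y₁*Δ*O.1 + (-275968)*(Real.sqrt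 2)*f^6*y₁^3*O.2 + 451584*(Real.sqrt 2)*f^6*y₁^4 + (-25088)*(Real.sqrt 2)*f^7*Δ*O.2 + 62720*(Real.sqrt 2)*f^7*y₁*Δ + (-250880)*(Real.sqrt 2)*f^7*y₁^2*O.1 + 100352*(Real.sqrt 2)*f^8*y₁*O.2 + (-75264)*(Real.sqrt 2)*f^8*y₁^2 + 200704*(Real.sqrt 2)*f^9*O.1 + 301056*(Real.sqrt 2)*f^10) = 0 := by
    linear_combination (exp := 1) (49*(6*y₁^2 + (-8)*f^2 + 4*(Real.sqrt 2)*y₁^2)^2*(3*y₁^2 + (-4)*f^2 + 2*(Real.sqrt 2)*y₁^2)^2) * hO₂ + ((-441)*y₁^4*(Q₁.1*(2*(2*Real.sqrt 2+3)*y₁^2-8*f^2)-((1+Real.sqrt 2)*((4*f*y₁+Δ)*y₁))) + (-882)*y₁^5*Δ + 5292*y₁^6*O.1 + (-3528)*f*y₁^6 + 1176*f^2*y₁^2*(Q₁.1*(2*(2*Real.sqrt 2+3)*y₁^2-8*f^2)-((1+Real.sqrt 2)*((4*f*y₁+Δ)*y₁))) + 2352*f^2*y₁^3*Δ + (-21168)*f^2*y₁^4*O.1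 + 9408*f^3*y₁^4 + (-784)*f^4*(Q₁.1*(2*(2*Real.sqrt 2+3)*y₁^2-8*f^2)-((1+Real.sqrt 2)*((4*f*y₁+Δ)*y₁))) + (-1568)*f^4*y₁*Δ + 28224*f^4*y₁^2*O.1 + (-6272)*f^5*y₁^2 + (-12544)*f^6*O.1 + (-588)*(Real.sqrt 2)*y₁^4*(Q₁.1*(2*(2*Real.sqrt 2+3)*y₁^2-8*f^2)-((1+Real.sqrt 2)*((4*f*y₁+Δ)*y₁))) + (-2058)*(Real.sqrt 2)*y₁^5*Δ + 10584*(Real.sqrt 2)*y₁^6*O.1 + (-8232)*(Real.sqrt 2)*f*y₁^6 + 784*(Real.sqrt 2)*f^2*y₁^2*(Q₁.1*(2*(2*Real.sqrt 2+3)*y₁^2-8*f^2)-((1+Real.sqrt 2)*((4*f*y₁+Δ)*y₁))) + 3920*(Real.sqrt 2)*f^2*y₁^3*Δ + (-28224)*(Real.sqrt 2)*f^2*y₁^4*O.1 + 15680*(Real.sqrt 2)*f^3*y₁^4 + (-1568)*(Real.sqrt 2)*f^4*y₁*Δ + 18816*(Real.sqrt 2)*f^4*y₁^2*O.1 + (-6272)*(Real.sqrt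 2)*f^5*y₁^2 + (-196)*(Real.sqrt 2)^2*y₁^4*(Q₁.1*(2*(2*Real.sqrt 2+3)*y₁^2-8*f^2)-((1+Real.sqrt 2)*((4*f*y₁+Δ)*y₁))) + (-1568)*(Real.sqrt 2)^2*y₁^5*Δ + 7056*(Real.sqrt 2)^2*y₁^6*O.1 + (-6272)*(Real.sqrt 2)^2*f*y₁^6 + 1568*(Real.sqrt 2)^2*f^2*y₁^3*Δ + (-9408)*(Real.sqrt 2)^2*f^2*y₁^4*O.1 + 6272*(Real.sqrt 2)^2*f^3*y₁^4 + (-392)*(Real.sqrt 2)^3*y₁^5*Δ + 1568*(Real.sqrt 2)^3*y₁^6*O.1 + (-1568)*(Real.sqrt 2)^3*f*y₁^6) * hg1x + ((-441)*y₁^4*(Q₁.2*(2*(2*Real.sqrt 2+3)*y₁^2-8*f^2)-((1+Real.sqrt 2)*((1+Real.sqrt 2)*y₁^3-4*(1+Real.sqrt 2)*f^2*y₁-2*Δ*f))) + 5292*y₁^6*O.2 + (-882)*y₁^7 + 1764*f*y₁^4*Δ + 1176*f^2*y₁^2*(Q₁.2*(2*(2*Real.sqrt 2+3)*y₁^2-8*f^2)-((1+Real.sqrt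 2)*((1+Real.sqrt 2)*y₁^3-4*(1+Real.sqrt 2)*f^2*y₁-2*Δ*f))) + (-21168)*f^2*y₁^4*O.2 + 5880*f^2*y₁^5 + (-4704)*f^3*y₁^2*Δ + (-784)*f^4*(Q₁.2*(2*(2*Real.sqrt 2+3)*y₁^2-8*f^2)-((1+Real.sqrt 2)*((1+Real.sqrt 2)*y₁^3-4*(1+Real.sqrt 2)*f^2*y₁-2*Δ*f))) + 28224*f^4*y₁^2*O.2 + (-10976)*f^4*y₁^3 + 3136*f^5*Δ + (-12544)*f^6*O.2 + 6272*f^6*y₁ + (-588)*(Real.sqrt 2)*y₁^4*(Q₁.2*(2*(2*Real.sqrt 2+3)*y₁^2-8*f^2)-((1+Real.sqrt 2)*((1+Real.sqrt 2)*y₁^3-4*(1+Real.sqrt 2)*f^2*y₁-2*Δ*f))) + 10584*(Real.sqrt 2)*y₁^6*O.2 + (-2940)*(Real.sqrt 2)*y₁^7 + 4116*(Real.sqrt 2)*f*y₁^4*Δ + 784*(Real.sqrt 2)*f^2*y₁^2*(Q₁.2*(2*(2*Real.sqrt 2+3)*y₁^2-8*f^2)-((1+Real.sqrt 2)*((1+Real.sqrt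 2)*y₁^3-4*(1+Real.sqrt 2)*f^2*y₁-2*Δ*f))) + (-28224)*(Real.sqrt 2)*f^2*y₁^4*O.2 + 18032*(Real.sqrt 2)*f^2*y₁^5 + (-7840)*(Real.sqrt 2)*f^3*y₁^2*Δ + 18816*(Real.sqrt 2)*f^4*y₁^2*O.2 + (-28224)*(Real.sqrt 2)*f^4*y₁^3 + 3136*(Real.sqrt 2)*f^5*Δ + 12544*(Real.sqrt 2)*f^6*y₁ + (-196)*(Real.sqrt 2)^2*y₁^4*(Q₁.2*(2*(2*Real.sqrt 2+3)*y₁^2-8*f^2)-((1+Real.sqrt 2)*((1+Real.sqrt 2)*y₁^3-4*(1+Real.sqrt 2)*f^2*y₁-2*Δ*f))) + 7056*(Real.sqrt 2)^2*y₁^6*O.2 + (-3626)*(Real.sqrt 2)^2*y₁^7 + 3136*(Real.sqrt 2)^2*f*y₁^4*Δ + (-9408)*(Real.sqrt 2)^2*f^2*y₁^4*O.2 + 19992*(Real.sqrt 2)^2*f^2*y₁^5 + (-3136)*(Real.sqrt 2)^2*f^3*y₁^2*Δ + (-23520)*(Real.sqrt 2)^2*f^4*y₁^3 + 6272*(Real.sqrt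 2)^2*f^6*y₁ + 1568*(Real.sqrt 2)^3*y₁^6*O.2 + (-1960)*(Real.sqrt 2)^3*y₁^7 + 784*(Real.sqrt 2)^3*f*y₁^4*Δ + 9408*(Real.sqrt 2)^3*f^2*y₁^5 + (-6272)*(Real.sqrt 2)^3*f^4*y₁^3 + (-392)*(Real.sqrt 2)^4*y₁^7 + 1568*(Real.sqrt 2)^4*f^2*y₁^5) * hg1y + (36*y₁^4*(Q₃.1*(7*((3+2*Real.sqrt 2)*y₁^2-4*f^2))-((1+Real.sqrt 2)*((5-3*Real.sqrt 2)*((1+2*Real.sqrt 2)*y₁^2-28*f^2)*f))) + (-1512)*y₁^6*O.1 + 360*f*y₁^6 + (-96)*f^2*y₁^2*(Q₃.1*(7*((3+2*Real.sqrt 2)*y₁^2-4*f^2))-((1+Real.sqrt 2)*((5-3*Real.sqrt 2)*((1+2*Real.sqrt 2)*y₁^2-28*f^2)*f))) + 6048*f^2*y₁^4*O.1 + (-11040)*f^3*y₁^4 + 64*f^4*(Q₃.1*(7*((3+2*Real.sqrt 2)*y₁^2-4*f^2))-((1+Real.sqrt 2)*((5-3*Real.sqrt 2)*((1+2*Real.sqrt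 2)*y₁^2-28*f^2)*f))) + (-8064)*f^4*y₁^2*O.1 + 27520*f^5*y₁^2 + 3584*f^6*O.1 + (-17920)*f^7 + 48*(Real.sqrt 2)*y₁^4*(Q₃.1*(7*((3+2*Real.sqrt 2)*y₁^2-4*f^2))-((1+Real.sqrt 2)*((5-3*Real.sqrt 2)*((1+2*Real.sqrt 2)*y₁^2-28*f^2)*f))) + (-3024)*(Real.sqrt 2)*y₁^6*O.1 + 1344*(Real.sqrt 2)*f*y₁^6 + (-64)*(Real.sqrt 2)*f^2*y₁^2*(Q₃.1*(7*((3+2*Real.sqrt 2)*y₁^2-4*f^2))-((1+Real.sqrt 2)*((5-3*Real.sqrt 2)*((1+2*Real.sqrt 2)*y₁^2-28*f^2)*f))) + 8064*(Real.sqrt 2)*f^2*y₁^4*O.1 + (-20416)*(Real.sqrt 2)*f^3*y₁^4 + (-5376)*(Real.sqrt 2)*f^4*y₁^2*O.1 + 30208*(Real.sqrt 2)*f^5*y₁^2 + (-7168)*(Real.sqrt 2)*f^7 + 16*(Real.sqrt 2)^2*y₁^4*(Q₃.1*(7*((3+2*Real.sqrt 2)*y₁^2-4*f^2))-((1+Real.sqrt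 2)*((5-3*Real.sqrt 2)*((1+2*Real.sqrt 2)*y₁^2-28*f^2)*f))) + (-2016)*(Real.sqrt 2)^2*y₁^6*O.1 + 1384*(Real.sqrt 2)^2*f*y₁^6 + 2688*(Real.sqrt 2)^2*f^2*y₁^4*O.1 + (-5536)*(Real.sqrt 2)^2*f^3*y₁^4 + (-8832)*(Real.sqrt 2)^2*f^5*y₁^2 + 10752*(Real.sqrt 2)^2*f^7 + (-448)*(Real.sqrt 2)^3*y₁^6*O.1 + 48*(Real.sqrt 2)^3*f*y₁^6 + 7296*(Real.sqrt 2)^3*f^3*y₁^4 + (-11520)*(Real.sqrt 2)^3*f^5*y₁^2 + (-544)*(Real.sqrt 2)^4*f*y₁^6 + 3456*(Real.sqrt 2)^4*f^3*y₁^4 + (-192)*(Real.sqrt 2)^5*f*y₁^6) * hg3x + (1764*y₁^4*(Q₃.2*((3+2*Real.sqrt 2)*y₁^2-4*f^2)-((1+Real.sqrt 2)*(-(8*f^2*y₁)))) + (-10584)*y₁^6*O.2 + (-4704)*f^2*y₁^2*(Q₃.2*((3+2*Real.sqrt 2)*y₁^2-4*f^2)-((1+Real.sqrt 2)*(-(8*f^2*y₁))))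 + 42336*f^2*y₁^4*O.2 + (-28224)*f^2*y₁^5 + 3136*f^4*(Q₃.2*((3+2*Real.sqrt 2)*y₁^2-4*f^2)-((1+Real.sqrt 2)*(-(8*f^2*y₁)))) + (-56448)*f^4*y₁^2*O.2 + 75264*f^4*y₁^3 + 25088*f^6*O.2 + (-50176)*f^6*y₁ + 2352*(Real.sqrt 2)*y₁^4*(Q₃.2*((3+2*Real.sqrt 2)*y₁^2-4*f^2)-((1+Real.sqrt 2)*(-(8*f^2*y₁)))) + (-21168)*(Real.sqrt 2)*y₁^6*O.2 + (-3136)*(Real.sqrt 2)*f^2*y₁^2*(Q₃.2*((3+2*Real.sqrt 2)*y₁^2-4*f^2)-((1+Real.sqrt 2)*(-(8*f^2*y₁)))) + 56448*(Real.sqrt 2)*f^2*y₁^4*O.2 + (-65856)*(Real.sqrt 2)*f^2*y₁^5 + (-37632)*(Real.sqrt 2)*f^4*y₁^2*O.2 + 125440*(Real.sqrt 2)*f^4*y₁^3 + (-50176)*(Real.sqrt 2)*f^6*y₁ + 784*(Real.sqrt 2)^2*y₁^4*(Q₃.2*((3+2*Real.sqrt 2)*y₁^2-4*f^2)-((1+Real.sqrt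 2)*(-(8*f^2*y₁)))) + (-14112)*(Real.sqrt 2)^2*y₁^6*O.2 + 18816*(Real.sqrt 2)^2*f^2*y₁^4*O.2 + (-50176)*(Real.sqrt 2)^2*f^2*y₁^5 + 50176*(Real.sqrt 2)^2*f^4*y₁^3 + (-3136)*(Real.sqrt 2)^3*y₁^6*O.2 + (-12544)*(Real.sqrt 2)^3*f^2*y₁^5) * hg3y + (20776*y₁^7*Δ*O.1 + 53900*y₁^9*O.2 + (-16121)*y₁^10 + (-41552)*f*y₁^6*Δ*O.2 + 4900*f*y₁^7*Δ + 67480*f*y₁^8*O.1 + (-37632)*f^2*y₁^5*Δ*O.1 + 10976*f^2*y₁^7*O.2 + 72364*f^2*y₁^8 + 75264*f^3*y₁^4*Δ*O.2 + (-98000)*f^3*y₁^5*Δ + (-89600)*f^3*y₁^6*O.1 + 18816*f^4*y₁^3*Δ*O.1 + (-112896)*f^4*y₁^5*O.2 + 139296*f^4*y₁^6 + (-37632)*f^5*y₁^2*Δ*O.2 + 122304*f^5*y₁^3*Δ + 198912*f^5*y₁^4*O.1 + 25088*f^6*y₁^3*O.2 + (-668544)*f^6*y₁^4 + (-37632)*f^7*y₁*Δ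 + (-372736)*f^7*y₁^2*O.1 + 50176*f^8*y₁*O.2 + 1349376*f^8*y₁^2 + 301056*f^9*O.1 + (-652288)*f^10 + 8624*(Real.sqrt 2)*y₁^7*Δ*O.1 + 29400*(Real.sqrt 2)*y₁^9*O.2 + (-9800)*(Real.sqrt 2)*y₁^10 + (-17248)*(Real.sqrt 2)*f*y₁^6*Δ*O.2 + 4900*(Real.sqrt 2)*f*y₁^7*Δ + 37408*(Real.sqrt 2)*f*y₁^8*O.1 + (-9408)*(Real.sqrt 2)*f^2*y₁^5*Δ*O.1 + (-26656)*(Real.sqrt 2)*f^2*y₁^7*O.2 + 53296*(Real.sqrt 2)*f^2*y₁^8 + 18816*(Real.sqrt 2)*f^3*y₁^4*Δ*O.2 + (-58800)*(Real.sqrt 2)*f^3*y₁^5*Δ + (-219520)*(Real.sqrt 2)*f^3*y₁^6*O.1 + 56448*(Real.sqrt 2)*f^4*y₁^5*O.2 + (-8448)*(Real.sqrt 2)*f^4*y₁^6 + 59584*(Real.sqrt 2)*f^5*y₁^3*Δ + 569856*(Real.sqrt 2)*f^5*y₁^4*O.1 + (-75264)*(Real.sqrt 2)*f^6*y₁^3*O.2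 + (-1102336)*(Real.sqrt 2)*f^6*y₁^4 + (-12544)*(Real.sqrt 2)*f^7*y₁*Δ + (-473088)*(Real.sqrt 2)*f^7*y₁^2*O.1 + 2107392*(Real.sqrt 2)*f^8*y₁^2 + (-1003520)*(Real.sqrt 2)*f^10 + 1568*(Real.sqrt 2)^2*y₁^7*Δ*O.1 + 10192*(Real.sqrt 2)^2*y₁^9*O.2 + (-4557)*(Real.sqrt 2)^2*y₁^10 + (-3136)*(Real.sqrt 2)^2*f*y₁^6*Δ*O.2 + 3136*(Real.sqrt 2)^2*f*y₁^7*Δ + 22400*(Real.sqrt 2)^2*f*y₁^8*O.1 + (-25088)*(Real.sqrt 2)^2*f^2*y₁^7*O.2 + 28468*(Real.sqrt 2)^2*f^2*y₁^8 + (-21952)*(Real.sqrt 2)^2*f^3*y₁^5*Δ + (-189952)*(Real.sqrt 2)^2*f^3*y₁^6*O.1 + 37632*(Real.sqrt 2)^2*f^4*y₁^5*O.2 + (-21600)*(Real.sqrt 2)^2*f^4*y₁^6 + 12544*(Real.sqrt 2)^2*f^5*y₁^3*Δ + 258048*(Real.sqrt 2)^2*f^5*y₁^4*O.1 + (-671616)*(Real.sqrt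 2)^2*f^6*y₁^4 + 367360*(Real.sqrt 2)^2*f^8*y₁^2 + 451584*(Real.sqrt 2)^2*f^10 + 1568*(Real.sqrt 2)^3*y₁^9*O.2 + (-1372)*(Real.sqrt 2)^3*y₁^10 + 784*(Real.sqrt 2)^3*f*y₁^7*Δ + 11648*(Real.sqrt 2)^3*f*y₁^8*O.1 + (-6272)*(Real.sqrt 2)^3*f^2*y₁^7*O.2 + 6960*(Real.sqrt 2)^3*f^2*y₁^8 + (-3136)*(Real.sqrt 2)^3*f^3*y₁^5*Δ + (-53760)*(Real.sqrt 2)^3*f^3*y₁^6*O.1 + (-18496)*(Real.sqrt 2)^3*f^4*y₁^6 + 142592*(Real.sqrt 2)^3*f^6*y₁^4 + (-516096)*(Real.sqrt 2)^3*f^8*y₁^2 + (-196)*(Real.sqrt 2)^4*y₁^10 + 2688*(Real.sqrt 2)^4*f*y₁^8*O.1 + 1152*(Real.sqrt 2)^4*f^2*y₁^8 + (-40768)*(Real.sqrt 2)^4*f^4*y₁^6 + 179712*(Real.sqrt 2)^4*f^6*y₁^4 + 1536*(Real.sqrt 2)^5*f^2*y₁^8 + (-18432)*(Real.sqrt 2)^5*f^4*y₁^6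 + 576*(Real.sqrt 2)^6*f^2*y₁^8) * hs + ((-441)*y₁^6 + (-588)*f^2*y₁^4 + 3920*f^4*y₁^2 + (-3136)*f^6 + (-1470)*(Real.sqrt 2)*y₁^6 + (-2744)*(Real.sqrt 2)*f^2*y₁^4 + 10976*(Real.sqrt 2)*f^4*y₁^2 + (-6272)*(Real.sqrt 2)*f^6 + (-1813)*(Real.sqrt 2)^2*y₁^6 + (-4508)*(Real.sqrt 2)^2*f^2*y₁^4 + 10192*(Real.sqrt 2)^2*f^4*y₁^2 + (-3136)*(Real.sqrt 2)^2*f^6 + (-980)*(Real.sqrt 2)^3*y₁^6 + (-3136)*(Real.sqrt 2)^3*f^2*y₁^4 + 3136*(Real.sqrt 2)^3*f^4*y₁^2 + (-196)*(Real.sqrt 2)^4*y₁^6 + (-784)*(Real.sqrt 2)^4*f^2*y₁^4) * hD2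
  have hGx : G.1 = (Q₁.1 + Q₂.1 + Q₃.1) / 3 := by rw [hG]
  have hGy : G.2 = (Q₁.2 + Q₂.2 + Q₃.2) / 3 := by rw [hG]
  rw [hGx, hGy]
  have key : ((12730592*y₁^12*Δ + 31949568*f^2*y₁^10*Δ + (-83768832)*f^4*y₁^8*Δ + (-2809856)*f^6*y₁^6*Δ + 96739328*f^8*y₁^4*Δ + (-67436544)*f^10*y₁^2*Δ + 19267584*f^12*Δ + 9001888*(Real.sqrt 2)*y₁^12*Δ + 22591744*(Real.sqrt 2)*f^2*y₁^10*Δ + (-59232768)*(Real.sqrt 2)*f^4*y₁^8*Δ + (-2007040)*(Real.sqrt 2)*f^6*y₁^6*Δ + 68640768*(Real.sqrt 2)*f^8*y₁^4*Δ + (-48168960)*(Real.sqrt 2)*f^10*y₁^2*Δ + 6422528*(Real.sqrt 2)*f^12*Δ)*(21*(2*(2*Real.sqrt 2+3)*y₁^2-8*f^2)*((3+2*Real.sqrt 2)*y₁^2-4*f^2))) * (((Q₁.1 + Q₂.1 + Q₃.1) / 3 - -f) * (O.2 - 0) - ((Q₁.2 + Q₂.2 + Q₃.2) / 3 - 0)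 * (O.1 - -f)) = 0 := by
    linear_combination (exp := 1) (53785144*y₁^14 + 63013216*f*y₁^11*Δ + (-58535008)*f^2*y₁^12 + 79071104*f^3*y₁^9*Δ + (-708566656)*f^4*y₁^10 + (-513852416)*f^5*y₁^7*Δ + 1425826304*f^6*y₁^8 + 630812672*f^7*y₁^5*Δ + (-616060928)*f^8*y₁^6 + (-311894016)*f^9*y₁^3*Δ + (-446767104)*f^10*y₁^4 + 56197120*f^11*y₁*Δ + 438337536*f^12*y₁^2 + (-134873088)*f^14 + 38031840*(Real.sqrt 2)*y₁^14 + 44557072*(Real.sqrt 2)*f*y₁^11*Δ + (-41390496)*(Real.sqrt 2)*f^2*y₁^12 + 55911744*(Real.sqrt 2)*f^3*y₁^9*Δ + (-501032448)*(Real.sqrt 2)*f^4*y₁^10 + (-363349504)*(Real.sqrt 2)*f^5*y₁^7*Δ + 1008211456*(Real.sqrt 2)*f^6*y₁^8 + 446064640*(Real.sqrt 2)*f^7*y₁^5*Δ + (-435527680)*(Real.sqrt 2)*f^8*y₁^6 + (-220573696)*(Real.sqrt 2)*f^9*y₁^3*Δ + (-317513728)*(Real.sqrt 2)*f^10*y₁^4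 + 39337984*(Real.sqrt 2)*f^11*y₁*Δ + 314703872*(Real.sqrt 2)*f^12*y₁^2 + (-44957696)*(Real.sqrt 2)*f^14) * hE1 + ((-75712)*f*y₁^7*Δ + (-198912)*f^3*y₁^5*Δ + 379904*f^5*y₁^3*Δ + (-143360)*f^7*y₁*Δ + (-53536)*(Real.sqrt 2)*f*y₁^7*Δ + (-140672)*(Real.sqrt 2)*f^3*y₁^5*Δ + 268800*(Real.sqrt 2)*f^5*y₁^3*Δ + (-100352)*(Real.sqrt 2)*f^7*y₁*Δ) * hE2 + (267342432*y₁^14*Δ*O.2 + 314484352*f^2*y₁^12*Δ*O.2 + (-2653733376)*f^4*y₁^10*Δ*O.2 + 2286520320*f^6*y₁^8*Δ*O.2 + 2110201856*f^8*y₁^6*Δ*O.2 + (-4124868608)*f^10*y₁^4*Δ*O.2 + 2292842496*f^12*y₁^2*Δ*O.2 + (-539492352)*f^14*Δ*O.2 + 367267936*(Real.sqrt 2)*y₁^14*Δ*O.2 + 669667712*(Real.sqrt 2)*f^2*y₁^12*Δ*O.2 + (-3049220608)*(Real.sqrt 2)*f^4*y₁^10*Δ*O.2 + 1577031680*(Real.sqrt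 2)*f^6*y₁^8*Δ*O.2 + 2852003840*(Real.sqrt 2)*f^8*y₁^6*Δ*O.2 + (-3877601280)*(Real.sqrt 2)*f^10*y₁^4*Δ*O.2 + 1753350144*(Real.sqrt 2)*f^12*y₁^2*Δ*O.2 + (-179830784)*(Real.sqrt 2)*f^14*Δ*O.2 + 126026432*(Real.sqrt 2)^2*y₁^14*Δ*O.2 + 316284416*(Real.sqrt 2)^2*f^2*y₁^12*Δ*O.2 + (-829258752)*(Real.sqrt 2)^2*f^4*y₁^10*Δ*O.2 + (-28098560)*(Real.sqrt 2)^2*f^6*y₁^8*Δ*O.2 + 960970752*(Real.sqrt 2)^2*f^8*y₁^6*Δ*O.2 + (-674365440)*(Real.sqrt 2)^2*f^10*y₁^4*Δ*O.2 + 89915392*(Real.sqrt 2)^2*f^12*y₁^2*Δ*O.2) * hg1x + ((-267342432)*y₁^14*Δ*O.1 + (-267342432)*f*y₁^14*Δ + (-314484352)*f^2*y₁^12*Δ*O.1 + (-314484352)*f^3*y₁^12*Δ + 2653733376*f^4*y₁^10*Δ*O.1 + 2653733376*f^5*y₁^10*Δ + (-2286520320)*f^6*y₁^8*Δ*O.1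 + (-2286520320)*f^7*y₁^8*Δ + (-2110201856)*f^8*y₁^6*Δ*O.1 + (-2110201856)*f^9*y₁^6*Δ + 4124868608*f^10*y₁^4*Δ*O.1 + 4124868608*f^11*y₁^4*Δ + (-2292842496)*f^12*y₁^2*Δ*O.1 + (-2292842496)*f^13*y₁^2*Δ + 539492352*f^14*Δ*O.1 + 539492352*f^15*Δ + (-367267936)*(Real.sqrt 2)*y₁^14*Δ*O.1 + (-367267936)*(Real.sqrt 2)*f*y₁^14*Δ + (-669667712)*(Real.sqrt 2)*f^2*y₁^12*Δ*O.1 + (-669667712)*(Real.sqrt 2)*f^3*y₁^12*Δ + 3049220608*(Real.sqrt 2)*f^4*y₁^10*Δ*O.1 + 3049220608*(Real.sqrt 2)*f^5*y₁^10*Δ + (-1577031680)*(Real.sqrt 2)*f^6*y₁^8*Δ*O.1 + (-1577031680)*(Real.sqrt 2)*f^7*y₁^8*Δ + (-2852003840)*(Real.sqrt 2)*f^8*y₁^6*Δ*O.1 + (-2852003840)*(Real.sqrt 2)*f^9*y₁^6*Δ + 3877601280*(Real.sqrt 2)*f^10*y₁^4*Δ*O.1 + 3877601280*(Real.sqrt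 2)*f^11*y₁^4*Δ + (-1753350144)*(Real.sqrt 2)*f^12*y₁^2*Δ*O.1 + (-1753350144)*(Real.sqrt 2)*f^13*y₁^2*Δ + 179830784*(Real.sqrt 2)*f^14*Δ*O.1 + 179830784*(Real.sqrt 2)*f^15*Δ + (-126026432)*(Real.sqrt 2)^2*y₁^14*Δ*O.1 + (-126026432)*(Real.sqrt 2)^2*f*y₁^14*Δ + (-316284416)*(Real.sqrt 2)^2*f^2*y₁^12*Δ*O.1 + (-316284416)*(Real.sqrt 2)^2*f^3*y₁^12*Δ + 829258752*(Real.sqrt 2)^2*f^4*y₁^10*Δ*O.1 + 829258752*(Real.sqrt 2)^2*f^5*y₁^10*Δ + 28098560*(Real.sqrt 2)^2*f^6*y₁^8*Δ*O.1 + 28098560*(Real.sqrt 2)^2*f^7*y₁^8*Δ + (-960970752)*(Real.sqrt 2)^2*f^8*y₁^6*Δ*O.1 + (-960970752)*(Real.sqrt 2)^2*f^9*y₁^6*Δ + 674365440*(Real.sqrt 2)^2*f^10*y₁^4*Δ*O.1 + 674365440*(Real.sqrt 2)^2*f^11*y₁^4*Δ + (-89915392)*(Real.sqrt 2)^2*f^12*y₁^2*Δ*O.1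 + (-89915392)*(Real.sqrt 2)^2*f^13*y₁^2*Δ) * hg1y + (267342432*y₁^14*Δ*O.2 + 314484352*f^2*y₁^12*Δ*O.2 + (-2653733376)*f^4*y₁^10*Δ*O.2 + 2286520320*f^6*y₁^8*Δ*O.2 + 2110201856*f^8*y₁^6*Δ*O.2 + (-4124868608)*f^10*y₁^4*Δ*O.2 + 2292842496*f^12*y₁^2*Δ*O.2 + (-539492352)*f^14*Δ*O.2 + 367267936*(Real.sqrt 2)*y₁^14*Δ*O.2 + 669667712*(Real.sqrt 2)*f^2*y₁^12*Δ*O.2 + (-3049220608)*(Real.sqrt 2)*f^4*y₁^10*Δ*O.2 + 1577031680*(Real.sqrt 2)*f^6*y₁^8*Δ*O.2 + 2852003840*(Real.sqrt 2)*f^8*y₁^6*Δ*O.2 + (-3877601280)*(Real.sqrt 2)*f^10*y₁^4*Δ*O.2 + 1753350144*(Real.sqrt 2)*f^12*y₁^2*Δ*O.2 + (-179830784)*(Real.sqrt 2)*f^14*Δ*O.2 + 126026432*(Real.sqrt 2)^2*y₁^14*Δ*O.2 + 316284416*(Real.sqrt 2)^2*f^2*y₁^12*Δ*O.2 + (-829258752)*(Real.sqrt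 2)^2*f^4*y₁^10*Δ*O.2 + (-28098560)*(Real.sqrt 2)^2*f^6*y₁^8*Δ*O.2 + 960970752*(Real.sqrt 2)^2*f^8*y₁^6*Δ*O.2 + (-674365440)*(Real.sqrt 2)^2*f^10*y₁^4*Δ*O.2 + 89915392*(Real.sqrt 2)^2*f^12*y₁^2*Δ*O.2) * hg2x + ((-267342432)*y₁^14*Δ*O.1 + (-267342432)*f*y₁^14*Δ + (-314484352)*f^2*y₁^12*Δ*O.1 + (-314484352)*f^3*y₁^12*Δ + 2653733376*f^4*y₁^10*Δ*O.1 + 2653733376*f^5*y₁^10*Δ + (-2286520320)*f^6*y₁^8*Δ*O.1 + (-2286520320)*f^7*y₁^8*Δ + (-2110201856)*f^8*y₁^6*Δ*O.1 + (-2110201856)*f^9*y₁^6*Δ + 4124868608*f^10*y₁^4*Δ*O.1 + 4124868608*f^11*y₁^4*Δ + (-2292842496)*f^12*y₁^2*Δ*O.1 + (-2292842496)*f^13*y₁^2*Δ + 539492352*f^14*Δ*O.1 + 539492352*f^15*Δ + (-367267936)*(Real.sqrt 2)*y₁^14*Δ*O.1 + (-367267936)*(Real.sqrt 2)*f*y₁^14*Δ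 + (-669667712)*(Real.sqrt 2)*f^2*y₁^12*Δ*O.1 + (-669667712)*(Real.sqrt 2)*f^3*y₁^12*Δ + 3049220608*(Real.sqrt 2)*f^4*y₁^10*Δ*O.1 + 3049220608*(Real.sqrt 2)*f^5*y₁^10*Δ + (-1577031680)*(Real.sqrt 2)*f^6*y₁^8*Δ*O.1 + (-1577031680)*(Real.sqrt 2)*f^7*y₁^8*Δ + (-2852003840)*(Real.sqrt 2)*f^8*y₁^6*Δ*O.1 + (-2852003840)*(Real.sqrt 2)*f^9*y₁^6*Δ + 3877601280*(Real.sqrt 2)*f^10*y₁^4*Δ*O.1 + 3877601280*(Real.sqrt 2)*f^11*y₁^4*Δ + (-1753350144)*(Real.sqrt 2)*f^12*y₁^2*Δ*O.1 + (-1753350144)*(Real.sqrt 2)*f^13*y₁^2*Δ + 179830784*(Real.sqrt 2)*f^14*Δ*O.1 + 179830784*(Real.sqrt 2)*f^15*Δ + (-126026432)*(Real.sqrt 2)^2*y₁^14*Δ*O.1 + (-126026432)*(Real.sqrt 2)^2*f*y₁^14*Δ + (-316284416)*(Real.sqrt 2)^2*f^2*y₁^12*Δ*O.1 + (-316284416)*(Real.sqrt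 2)^2*f^3*y₁^12*Δ + 829258752*(Real.sqrt 2)^2*f^4*y₁^10*Δ*O.1 + 829258752*(Real.sqrt 2)^2*f^5*y₁^10*Δ + 28098560*(Real.sqrt 2)^2*f^6*y₁^8*Δ*O.1 + 28098560*(Real.sqrt 2)^2*f^7*y₁^8*Δ + (-960970752)*(Real.sqrt 2)^2*f^8*y₁^6*Δ*O.1 + (-960970752)*(Real.sqrt 2)^2*f^9*y₁^6*Δ + 674365440*(Real.sqrt 2)^2*f^10*y₁^4*Δ*O.1 + 674365440*(Real.sqrt 2)^2*f^11*y₁^4*Δ + (-89915392)*(Real.sqrt 2)^2*f^12*y₁^2*Δ*O.1 + (-89915392)*(Real.sqrt 2)^2*f^13*y₁^2*Δ) * hg2y + (76383552*y₁^14*Δ*O.2 + 89852672*f^2*y₁^12*Δ*O.2 + (-758209536)*f^4*y₁^10*Δ*O.2 + 653291520*f^6*y₁^8*Δ*O.2 + 602914816*f^8*y₁^6*Δ*O.2 + (-1178533888)*f^10*y₁^4*Δ*O.2 + 655097856*f^12*y₁^2*Δ*O.2 + (-154140672)*f^14*Δ*O.2 + 104933696*(Real.sqrt 2)*y₁^14*Δ*O.2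 + 191333632*(Real.sqrt 2)*f^2*y₁^12*Δ*O.2 + (-871205888)*(Real.sqrt 2)*f^4*y₁^10*Δ*O.2 + 450580480*(Real.sqrt 2)*f^6*y₁^8*Δ*O.2 + 814858240*(Real.sqrt 2)*f^8*y₁^6*Δ*O.2 + (-1107886080)*(Real.sqrt 2)*f^10*y₁^4*Δ*O.2 + 500957184*(Real.sqrt 2)*f^12*y₁^2*Δ*O.2 + (-51380224)*(Real.sqrt 2)*f^14*Δ*O.2 + 36007552*(Real.sqrt 2)^2*y₁^14*Δ*O.2 + 90366976*(Real.sqrt 2)^2*f^2*y₁^12*Δ*O.2 + (-236931072)*(Real.sqrt 2)^2*f^4*y₁^10*Δ*O.2 + (-8028160)*(Real.sqrt 2)^2*f^6*y₁^8*Δ*O.2 + 274563072*(Real.sqrt 2)^2*f^8*y₁^6*Δ*O.2 + (-192675840)*(Real.sqrt 2)^2*f^10*y₁^4*Δ*O.2 + 25690112*(Real.sqrt 2)^2*f^12*y₁^2*Δ*O.2) * hg3x + ((-534684864)*y₁^14*Δ*O.1 + (-534684864)*f*y₁^14*Δ + (-628968704)*f^2*y₁^12*Δ*O.1 + (-628968704)*f^3*y₁^12*Δ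 + 5307466752*f^4*y₁^10*Δ*O.1 + 5307466752*f^5*y₁^10*Δ + (-4573040640)*f^6*y₁^8*Δ*O.1 + (-4573040640)*f^7*y₁^8*Δ + (-4220403712)*f^8*y₁^6*Δ*O.1 + (-4220403712)*f^9*y₁^6*Δ + 8249737216*f^10*y₁^4*Δ*O.1 + 8249737216*f^11*y₁^4*Δ + (-4585684992)*f^12*y₁^2*Δ*O.1 + (-4585684992)*f^13*y₁^2*Δ + 1078984704*f^14*Δ*O.1 + 1078984704*f^15*Δ + (-734535872)*(Real.sqrt 2)*y₁^14*Δ*O.1 + (-734535872)*(Real.sqrt 2)*f*y₁^14*Δ + (-1339335424)*(Real.sqrt 2)*f^2*y₁^12*Δ*O.1 + (-1339335424)*(Real.sqrt 2)*f^3*y₁^12*Δ + 6098441216*(Real.sqrt 2)*f^4*y₁^10*Δ*O.1 + 6098441216*(Real.sqrt 2)*f^5*y₁^10*Δ + (-3154063360)*(Real.sqrt 2)*f^6*y₁^8*Δ*O.1 + (-3154063360)*(Real.sqrt 2)*f^7*y₁^8*Δ + (-5704007680)*(Real.sqrt 2)*f^8*y₁^6*Δ*O.1 + (-5704007680)*(Real.sqrt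 2)*f^9*y₁^6*Δ + 7755202560*(Real.sqrt 2)*f^10*y₁^4*Δ*O.1 + 7755202560*(Real.sqrt 2)*f^11*y₁^4*Δ + (-3506700288)*(Real.sqrt 2)*f^12*y₁^2*Δ*O.1 + (-3506700288)*(Real.sqrt 2)*f^13*y₁^2*Δ + 359661568*(Real.sqrt 2)*f^14*Δ*O.1 + 359661568*(Real.sqrt 2)*f^15*Δ + (-252052864)*(Real.sqrt 2)^2*y₁^14*Δ*O.1 + (-252052864)*(Real.sqrt 2)^2*f*y₁^14*Δ + (-632568832)*(Real.sqrt 2)^2*f^2*y₁^12*Δ*O.1 + (-632568832)*(Real.sqrt 2)^2*f^3*y₁^12*Δ + 1658517504*(Real.sqrt 2)^2*f^4*y₁^10*Δ*O.1 + 1658517504*(Real.sqrt 2)^2*f^5*y₁^10*Δ + 56197120*(Real.sqrt 2)^2*f^6*y₁^8*Δ*O.1 + 56197120*(Real.sqrt 2)^2*f^7*y₁^8*Δ + (-1921941504)*(Real.sqrt 2)^2*f^8*y₁^6*Δ*O.1 + (-1921941504)*(Real.sqrt 2)^2*f^9*y₁^6*Δ + 1348730880*(Real.sqrt 2)^2*f^10*y₁^4*Δ*O.1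 + 1348730880*(Real.sqrt 2)^2*f^11*y₁^4*Δ + (-179830784)*(Real.sqrt 2)^2*f^12*y₁^2*Δ*O.1 + (-179830784)*(Real.sqrt 2)^2*f^13*y₁^2*Δ) * hg3y + ((-1238641600)*y₁^17*Δ*O.1 + 3626768320*f*y₁^16*Δ*O.2 + (-1201740288)*f*y₁^17*Δ + 8956416*f*y₁^18*O.1 + 5230107904*f^2*y₁^15*Δ*O.1 + (-17912832)*f^2*y₁^17*O.2 + 52157952*f^2*y₁^18 + 12924308992*f^3*y₁^14*Δ*O.2 + 5338111744*f^3*y₁^15*Δ + (-125741056)*f^3*y₁^16*O.1 + 26420724736*f^4*y₁^13*Δ*O.1 + 251482112*f^4*y₁^15*O.2 + 448874496*f^4*y₁^16 + (-23532443648)*f^5*y₁^12*Δ*O.2 + 25772350464*f^5*y₁^13*Δ + (-3498270720)*f^5*y₁^14*O.1 + (-61778898944)*f^6*y₁^11*Δ*O.1 + 6996541440*f^6*y₁^13*O.2 + (-9415827456)*f^6*y₁^14 + (-48529022976)*f^7*y₁^10*Δ*O.2 + (-62950608896)*f^7*y₁^11*Δ + 33864384512*f^7*y₁^12*O.1 +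 5423022080*f^8*y₁^9*Δ*O.1 + (-67728769024)*f^8*y₁^11*O.2 + (-8733032448)*f^8*y₁^12 + 90018152448*f^9*y₁^8*Δ*O.2 + 10300932096*f^9*y₁^9*Δ + 73415917568*f^9*y₁^10*O.1 + 81845485568*f^10*y₁^7*Δ*O.1 + (-146831835136)*f^10*y₁^9*O.2 + 91488911360*f^10*y₁^10 + 9948495872*f^11*y₁^6*Δ*O.2 + 96097075200*f^11*y₁^7*Δ + (-342577643520)*f^11*y₁^8*O.1 + (-51341688832)*f^12*y₁^5*Δ*O.1 + 685155287040*f^12*y₁^7*O.2 + (-134333595648)*f^12*y₁^8 + (-88091394048)*f^13*y₁^4*Δ*O.2 + (-34977087488)*f^13*y₁^5*Δ + 328730673152*f^13*y₁^6*O.1 + (-11149508608)*f^14*y₁^3*Δ*O.1 + (-657461346304)*f^14*y₁^5*O.2 + 88476745728*f^14*y₁^6 + 55593402368*f^15*y₁^2*Δ*O.2 + (-59344158720)*f^15*y₁^3*Δ + (-94950653952)*f^15*y₁^4*O.1 + 11509170176*f^16*y₁*Δ*O.1 + 189901307904*f^16*y₁^3*O.2 + (-31650217984)*f^16*y₁^4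 + (-12947816448)*f^17*Δ*O.2 + 27334279168*f^17*y₁*Δ + (-1238641600)*(Real.sqrt 2)*y₁^17*Δ*O.1 + 2167161024*(Real.sqrt 2)*f*y₁^16*Δ*O.2 + (-1238641600)*(Real.sqrt 2)*f*y₁^17*Δ + 4366516224*(Real.sqrt 2)*f^2*y₁^15*Δ*O.1 + 12775913472*(Real.sqrt 2)*f^3*y₁^14*Δ*O.2 + 4366516224*(Real.sqrt 2)*f^3*y₁^15*Δ + 24893919232*(Real.sqrt 2)*f^4*y₁^13*Δ*O.1 + (-1895649280)*(Real.sqrt 2)*f^5*y₁^12*Δ*O.2 + 24893919232*(Real.sqrt 2)*f^5*y₁^13*Δ + 1146421248*(Real.sqrt 2)*f^5*y₁^14*O.1 + (-53971714048)*(Real.sqrt 2)*f^6*y₁^11*Δ*O.1 + (-2292842496)*(Real.sqrt 2)*f^6*y₁^13*O.2 + 6676217856*(Real.sqrt 2)*f^6*y₁^14 + (-63944294400)*(Real.sqrt 2)*f^7*y₁^10*Δ*O.2 + (-53971714048)*(Real.sqrt 2)*f^7*y₁^11*Δ + (-25266225152)*(Real.sqrt 2)*f^7*y₁^12*O.1 +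 2169208832*(Real.sqrt 2)*f^8*y₁^9*Δ*O.1 + 50532450304*(Real.sqrt 2)*f^8*y₁^11*O.2 + 4046192640*(Real.sqrt 2)*f^8*y₁^12 + 54715121664*(Real.sqrt 2)*f^9*y₁^8*Δ*O.2 + 2169208832*(Real.sqrt 2)*f^9*y₁^9*Δ + (-43878711296)*(Real.sqrt 2)*f^9*y₁^10*O.1 + 64019759104*(Real.sqrt 2)*f^10*y₁^7*Δ*O.1 + 87757422592*(Real.sqrt 2)*f^10*y₁^9*O.2 + (-62581112832)*(Real.sqrt 2)*f^10*y₁^10 + 45548568576*(Real.sqrt 2)*f^11*y₁^6*Δ*O.2 + 64019759104*(Real.sqrt 2)*f^11*y₁^7*Δ + 238815281152*(Real.sqrt 2)*f^11*y₁^8*O.1 + (-56466866176)*(Real.sqrt 2)*f^12*y₁^5*Δ*O.1 + (-477630562304)*(Real.sqrt 2)*f^12*y₁^7*O.2 + 94950653952*(Real.sqrt 2)*f^12*y₁^8 + (-83903905792)*(Real.sqrt 2)*f^13*y₁^4*Δ*O.2 + (-56466866176)*(Real.sqrt 2)*f^13*y₁^5*Δ + (-235937988608)*(Real.sqrt 2)*f^13*y₁^6*O.1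 + 17263755264*(Real.sqrt 2)*f^14*y₁^3*Δ*O.1 + 471875977216*(Real.sqrt 2)*f^14*y₁^5*O.2 + (-63300435968)*(Real.sqrt 2)*f^14*y₁^6 + 41515220992*(Real.sqrt 2)*f^15*y₁^2*Δ*O.2 + 17263755264*(Real.sqrt 2)*f^15*y₁^3*Δ + 69055021056*(Real.sqrt 2)*f^15*y₁^4*O.1 + (-1438646272)*(Real.sqrt 2)*f^16*y₁*Δ*O.1 + (-138110042112)*(Real.sqrt 2)*f^16*y₁^3*O.2 + 23018340352*(Real.sqrt 2)*f^16*y₁^4 + (-4315938816)*(Real.sqrt 2)*f^17*Δ*O.2 + (-1438646272)*(Real.sqrt 2)*f^17*y₁*Δ + (-252052864)*(Real.sqrt 2)^2*y₁^17*Δ*O.1 + (-593594624)*(Real.sqrt 2)^2*f*y₁^16*Δ*O.2 + (-252052864)*(Real.sqrt 2)^2*f*y₁^17*Δ + 375642624*(Real.sqrt 2)^2*f^2*y₁^15*Δ*O.1 + 1966999552*(Real.sqrt 2)^2*f^3*y₁^14*Δ*O.2 + 375642624*(Real.sqrt 2)^2*f^3*y₁^15*Δ + 4188792832*(Real.sqrt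 2)^2*f^4*y₁^13*Δ*O.1 + 12581130240*(Real.sqrt 2)^2*f^5*y₁^12*Δ*O.2 + 4188792832*(Real.sqrt 2)^2*f^5*y₁^13*Δ + (-6577872896)*(Real.sqrt 2)^2*f^6*y₁^11*Δ*O.1 + (-22613721088)*(Real.sqrt 2)^2*f^7*y₁^10*Δ*O.2 + (-6577872896)*(Real.sqrt 2)^2*f^7*y₁^11*Δ + (-2146729984)*(Real.sqrt 2)^2*f^8*y₁^9*Δ*O.1 + (-5288951808)*(Real.sqrt 2)^2*f^9*y₁^8*Δ*O.2 + (-2146729984)*(Real.sqrt 2)^2*f^9*y₁^9*Δ + 9036496896*(Real.sqrt 2)^2*f^10*y₁^7*Δ*O.1 + 29517938688*(Real.sqrt 2)^2*f^11*y₁^6*Δ*O.2 + 9036496896*(Real.sqrt 2)^2*f^11*y₁^7*Δ + (-5574754304)*(Real.sqrt 2)^2*f^12*y₁^5*Δ*O.1 + (-19164823552)*(Real.sqrt 2)^2*f^13*y₁^4*Δ*O.2 + (-5574754304)*(Real.sqrt 2)^2*f^13*y₁^5*Δ + 719323136*(Real.sqrt 2)^2*f^14*y₁^3*Δ*O.1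 + 2466250752*(Real.sqrt 2)^2*f^15*y₁^2*Δ*O.2 + 719323136*(Real.sqrt 2)^2*f^15*y₁^3*Δ + (-216045312)*(Real.sqrt 2)^3*f*y₁^16*Δ*O.2 + (-542201856)*(Real.sqrt 2)^3*f^3*y₁^14*Δ*O.2 + 1421586432*(Real.sqrt 2)^3*f^5*y₁^12*Δ*O.2 + 48168960*(Real.sqrt 2)^3*f^7*y₁^10*Δ*O.2 + (-1647378432)*(Real.sqrt 2)^3*f^9*y₁^8*Δ*O.2 + 1156055040*(Real.sqrt 2)^3*f^11*y₁^6*Δ*O.2 + (-154140672)*(Real.sqrt 2)^3*f^13*y₁^4*Δ*O.2) * hs + ((-17912832)*f*y₁^14*O.1 + 35825664*f^2*y₁^13*O.2 + (-104315904)*f^2*y₁^14 + 394784768*f^3*y₁^12*O.1 + (-789569536)*f^4*y₁^11*O.2 + (-63221760)*f^4*y₁^12 + 685604864*f^5*y₁^10*O.1 + (-1371209728)*f^6*y₁^9*O.2 + 977829888*f^6*y₁^10 + (-3731488768)*f^7*y₁^8*O.1 + 7462977536*f^8*y₁^7*O.2 + (-1483603968)*f^8*y₁^8 + 3686531072*f^9*y₁^6*O.1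 + (-7373062144)*f^10*y₁^5*O.2 + 989069312*f^10*y₁^6 + (-1078984704)*f^11*y₁^4*O.1 + 2157969408*f^12*y₁^3*O.2 + (-359661568)*f^12*y₁^4 + 8956416*(Real.sqrt 2)^2*f*y₁^14*O.1 + (-17912832)*(Real.sqrt 2)^2*f^2*y₁^13*O.2 + 52157952*(Real.sqrt 2)^2*f^2*y₁^14 + (-197392384)*(Real.sqrt 2)^2*f^3*y₁^12*O.1 + 394784768*(Real.sqrt 2)^2*f^4*y₁^11*O.2 + 31610880*(Real.sqrt 2)^2*f^4*y₁^12 + (-342802432)*(Real.sqrt 2)^2*f^5*y₁^10*O.1 + 685604864*(Real.sqrt 2)^2*f^6*y₁^9*O.2 + (-488914944)*(Real.sqrt 2)^2*f^6*y₁^10 + 1865744384*(Real.sqrt 2)^2*f^7*y₁^8*O.1 + (-3731488768)*(Real.sqrt 2)^2*f^8*y₁^7*O.2 + 741801984*(Real.sqrt 2)^2*f^8*y₁^8 + (-1843265536)*(Real.sqrt 2)^2*f^9*y₁^6*O.1 + 3686531072*(Real.sqrt 2)^2*f^10*y₁^5*O.2 + (-494534656)*(Real.sqrt 2)^2*f^10*y₁^6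 + 539492352*(Real.sqrt 2)^2*f^11*y₁^4*O.1 + (-1078984704)*(Real.sqrt 2)^2*f^12*y₁^3*O.2 + 179830784*(Real.sqrt 2)^2*f^12*y₁^4) * hD2
  have hdtf : (12730592*y₁^12*Δ + 31949568*f^2*y₁^10*Δ + (-83768832)*f^4*y₁^8*Δ + (-2809856)*f^6*y₁^6*Δ + 96739328*f^8*y₁^4*Δ + (-67436544)*f^10*y₁^2*Δ + 19267584*f^12*Δ + 9001888*(Real.sqrt 2)*y₁^12*Δ + 22591744*(Real.sqrt 2)*f^2*y₁^10*Δ + (-59232768)*(Real.sqrt 2)*f^4*y₁^8*Δ + (-2007040)*(Real.sqrt 2)*f^6*y₁^6*Δ + 68640768*(Real.sqrt 2)*f^8*y₁^4*Δ + (-48168960)*(Real.sqrt 2)*f^10*y₁^2*Δ + 6422528*(Real.sqrt 2)*f^12*Δ) = Δ*(2*(2*Real.sqrt 2+3)*y₁^2-8*f^2)^3*((3+2*Real.sqrt 2)*y₁^2-4*f^2)*(1372*y₁^4+7840*f^2*y₁^2+9408*f^4+980*Real.sqrt 2*y₁^4+4704*Real.sqrt 2*f^2*y₁^2+3136*Real.sqrt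 2*f^4) := by
    linear_combination (exp := 1) ((-5920768)*y₁^12*Δ + (-15805440)*f^2*y₁^10*Δ + 36126720*f^4*y₁^8*Δ + 8028160*f^6*y₁^6*Δ + (-38535168)*f^8*y₁^4*Δ + 12845056*f^10*y₁^2*Δ + (-2998016)*(Real.sqrt 2)*y₁^12*Δ + (-9433088)*(Real.sqrt 2)*f^2*y₁^10*Δ + 13246464*(Real.sqrt 2)*f^4*y₁^8*Δ + 9633792*(Real.sqrt 2)*f^6*y₁^6*Δ + (-9633792)*(Real.sqrt 2)*f^8*y₁^4*Δ + (-928256)*(Real.sqrt 2)^2*y₁^12*Δ + (-3612672)*(Real.sqrt 2)^2*f^2*y₁^10*Δ + 1204224*(Real.sqrt 2)^2*f^4*y₁^8*Δ + 3211264*(Real.sqrt 2)^2*f^6*y₁^6*Δ + (-125440)*(Real.sqrt 2)^3*y₁^12*Δ + (-602112)*(Real.sqrt 2)^3*f^2*y₁^10*Δ + (-401408)*(Real.sqrt 2)^3*f^4*y₁^8*Δ) * hs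
  have hH0 : (0:ℝ) < (1372*y₁^4+7840*f^2*y₁^2+9408*f^4+980*Real.sqrt 2*y₁^4+4704*Real.sqrt 2*f^2*y₁^2+3136*Real.sqrt 2*f^4) := by
    have ha : (0:ℝ) ≤ 1372*y₁^4+7840*f^2*y₁^2 := by positivity
    have hb : (0:ℝ) ≤ 980*Real.sqrt 2*y₁^4+4704*Real.sqrt 2*f^2*y₁^2+3136*Real.sqrt 2*f^4 := by positivity
    linarith [ha, hb, pow_pos hf 4]
  have hMne : ((12730592*y₁^12*Δ + 31949568*f^2*y₁^10*Δ + (-83768832)*f^4*y₁^8*Δ + (-2809856)*f^6*y₁^6*Δ + 96739328*f^8*y₁^4*Δ + (-67436544)*f^10*y₁^2*Δ + 19267584*f^12*Δ + 9001888*(Real.sqrt 2)*y₁^12*Δ + 22591744*(Real.sqrt 2)*f^2*y₁^10*Δ + (-59232768)*(Real.sqrt 2)*f^4*y₁^8*Δ + (-2007040)*(Real.sqrt 2)*f^6*y₁^6*Δ + 68640768*(Real.sqrt 2)*f^8*y₁^4*Δ + (-48168960)*(Real.sqrt 2)*f^10*y₁^2*Δ + 6422528*(Real.sqrt 2)*f^12*Δ)*(21*(2*(2*Real.sqrt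 2+3)*y₁^2-8*f^2)*((3+2*Real.sqrt 2)*y₁^2-4*f^2))) ≠ 0 := by
    rw [hdtf]
    exact mul_ne_zero (mul_ne_zero (mul_ne_zero (mul_ne_zero hDpos.ne' (pow_ne_zero 3 hden₁)) hden₃) hH0.ne') (mul_ne_zero (mul_ne_zero (by norm_num : (21:ℝ) ≠ 0) hden₁) hden₃)
  exact (mul_eq_zero.mp key).resolve_left hMne
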